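/- Let A be the n×n matrix with 1's on the diagonal and superdiagonal, -1 in the lower-left corner, and 0's elsewhere. Then the eigenvalues of A are γ_s = 1 + e^{iπ(2s+1)/n} for s = 0,...,n-1, and the largest singular value of A is 2cos(π/(2n)). -/

import Mathlib

open Matrix Complex

noncomputable def th (n s : ℕ) : ℝ := Real.pi * (2 * s + 1) / n
noncomputable def mu (n s : ℕ) : ℂ := Complex.exp (th n s * Complex.I)
noncomputable def uu (n s : ℕ) : Fin n → ℂ := fun j => mu n s ^ (j : ℕ)

lemma mu_mul_conj (n s : ℕ) : mu n s * (starRingEnd ℂ) (mu n s) = 1 := by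
  rw [mu, ← Complex.exp_conj, ← Complex.exp_add]; simp [mul_comm]

lemma mu_pow_n {n : ℕ} (hn : 2 ≤ n) (s : ℕ) : mu n s ^ n = -1 := by
  rw [mu, ← Complex.exp_nat_mul, th]
  have hn0 : (n:ℂ) ≠ 0 := Nat.cast_ne_zero.mpr (by omega)
  have : (n:ℂ) * (↑(Real.pi * (2 * s + 1) / n) * Complex.I)
      = (2*s+1 : ℕ) * (Real.pi * Complex.I) := by push_cast; field_simp
  rw [this, Complex.exp_nat_mul, Complex.exp_pi_mul_I]
  exact Odd.neg_one_pow ⟨s, by ring⟩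

lemma mu_add_conj (n s : ℕ) :
    mu n s + (starRingEnd ℂ) (mu n s) = ((2 * Real.cos (th n s) : ℝ) : ℂ) := by
  rw [mu, ← Complex.exp_conj]
  have : (starRingEnd ℂ) (↑(th n s) * Complex.I) = -(↑(th n s) * Complex.I) := by
    simp [Complex.conj_ofReal]
  rw [this, Complex.exp_mul_I, ← neg_mul, Complex.exp_mul_I]
  rw [← Complex.ofReal_cos, ← Complex.ofReal_sin, ← Complex.ofReal_neg,
    ← Complex.ofReal_cos, ← Complex.ofReal_sin]
  push_cast
  simp [Real.cos_neg, Real.sin_neg]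
  ring

section
variable {n : ℕ} (hn : 2 ≤ n) {A : Matrix (Fin n) (Fin n) ℂ}
  (hA : ∀ j k : Fin n, A j k =
      if (j : ℕ) = (k : ℕ) then 1
      else if (k : ℕ) = (j : ℕ) + 1 then 1
      else if (j : ℕ) = n - 1 ∧ (k : ℕ) = 0 then -1
      else 0)

include hn hA

lemma A_mulVec_mid (v : Fin n → ℂ) (j : Fin n) (h : (j:ℕ) + 1 < n) :
    A.mulVec v j = v j + v ⟨(j:ℕ)+1, h⟩ := by
  have coeff : ∀ k : Fin n, A j k =
      (if k = j then 1 else 0) + (if k = ⟨(j:ℕ)+1, h⟩ then 1 else 0) := by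
    intro k
    have hj := j.isLt; have hk := k.isLt
    rw [hA]
    simp only [Fin.ext_iff]
    split_ifs <;> first | ring1 | (exfalso; omega)
  simp only [Matrix.mulVec, dotProduct, coeff, add_mul, ite_mul, one_mul, zero_mul,
    Finset.sum_add_distrib, Finset.sum_ite_eq', Finset.mem_univ, if_true]

lemma A_mulVec_last (v : Fin n → ℂ) (j : Fin n) (h : (j:ℕ) = n - 1) :
    A.mulVec v j = v j - v ⟨0, by omega⟩ := by
  have coeff : ∀ k : Fin n, A j k =
      (if k = j then 1 else 0) + (if k = (⟨0, by omega⟩ : Fin n) then -1 else 0) := by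
    intro k
    have hj := j.isLt; have hk := k.isLt
    rw [hA]
    simp only [Fin.ext_iff]
    split_ifs <;> first | ring1 | (exfalso; omega)
  simp only [Matrix.mulVec, dotProduct, coeff, add_mul, ite_mul, one_mul, zero_mul,
    neg_mul, Finset.sum_add_distrib, Finset.sum_ite_eq', Finset.mem_univ, if_true]
  ring

lemma AH_mulVec_first (v : Fin n → ℂ) (j : Fin n) (h : (j:ℕ) = 0) :
    Aᴴ.mulVec v j = v j - v ⟨n-1, by omega⟩ := by
  have coeff : ∀ k : Fin n, Aᴴ j k =
      (if k = j then 1 else 0) + (if k = (⟨n-1, by omega⟩ : Fin n) then -1 else 0) := by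
    intro k
    have hj := j.isLt; have hk := k.isLt
    rw [Matrix.conjTranspose_apply, hA]
    simp only [Fin.ext_iff]
    split_ifs <;> first | (simp; done) | (exfalso; omega)
  simp only [Matrix.mulVec, dotProduct, coeff, add_mul, ite_mul, one_mul, zero_mul,
    neg_mul, Finset.sum_add_distrib, Finset.sum_ite_eq', Finset.mem_univ, if_true]
  ring

lemma AH_mulVec_rest (v : Fin n → ℂ) (j : Fin n) (h : 0 < (j:ℕ)) :
    Aᴴ.mulVec v j = v j + v ⟨(j:ℕ)-1, by omega⟩ := by
  have coeff : ∀ k : Fin n, Aᴴ j k =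
      (if k = j then 1 else 0) + (if k = (⟨(j:ℕ)-1, by omega⟩ : Fin n) then 1 else 0) := by
    intro k
    have hj := j.isLt; have hk := k.isLt
    rw [Matrix.conjTranspose_apply, hA]
    simp only [Fin.ext_iff]
    split_ifs <;> first | (simp; done) | (exfalso; omega)
  simp only [Matrix.mulVec, dotProduct, coeff, add_mul, ite_mul, one_mul, zero_mul,
    Finset.sum_add_distrib, Finset.sum_ite_eq', Finset.mem_univ, if_true]

lemma A_mulVec_u (s : ℕ) : A.mulVec (uu n s) = (1 + mu n s) • uu n s := by
  funext j
  have hmun := mu_pow_n hn s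
  rcases lt_or_ge ((j:ℕ)+1) n with h | h
  · rw [A_mulVec_mid hn hA _ j h]
    simp only [uu, Pi.smul_apply, smul_eq_mul]
    ring
  · have hj : (j:ℕ) = n - 1 := by have := j.isLt; omega
    rw [A_mulVec_last hn hA _ j hj]
    simp only [uu, Pi.smul_apply, smul_eq_mul, pow_zero]
    have h1 : (1 + mu n s) * mu n s ^ (j:ℕ) = mu n s ^ (j:ℕ) + mu n s ^ ((j:ℕ)+1) := by
      rw [pow_succ]; ring
    rw [h1, hj, Nat.sub_add_cancel (by omega), hmun]
    ring

lemma AH_mulVec_u (s : ℕ) :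
    Aᴴ.mulVec (uu n s) = (1 + (starRingEnd ℂ) (mu n s)) • uu n s := by
  have hmun := mu_pow_n hn s
  have hmc := mu_mul_conj n s
  funext j
  rcases Nat.eq_zero_or_pos (j:ℕ) with h | h
  · rw [AH_mulVec_first hn hA _ j h]
    simp only [uu, Pi.smul_apply, smul_eq_mul, h, pow_zero]
    have h1 : mu n s ^ (n-1) = - (starRingEnd ℂ) (mu n s) := by
      calc mu n s ^ (n-1) = mu n s ^ (n-1) * (mu n s * (starRingEnd ℂ) (mu n s)) := by
            rw [hmc, mul_one]
        _ = (mu n s ^ (n-1) * mu n s) * (starRingEnd ℂ) (mu n s) := by ring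
        _ = mu n s ^ n * (starRingEnd ℂ) (mu n s) := by
            rw [← pow_succ, Nat.sub_add_cancel (by omega)]
        _ = - (starRingEnd ℂ) (mu n s) := by rw [hmun]; ring
    rw [h1]; ring
  · rw [AH_mulVec_rest hn hA _ j h]
    simp only [uu, Pi.smul_apply, smul_eq_mul]
    have h1 : (starRingEnd ℂ) (mu n s) * mu n s ^ (j:ℕ) = mu n s ^ ((j:ℕ)-1) := by
      calc (starRingEnd ℂ) (mu n s) * mu n s ^ (j:ℕ)
          = (starRingEnd ℂ) (mu n s) * (mu n s ^ ((j:ℕ)-1) * mu n s) := by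
            rw [← pow_succ, Nat.sub_add_cancel (by omega)]
        _ = (mu n s * (starRingEnd ℂ) (mu n s)) * mu n s ^ ((j:ℕ)-1) := by ring
        _ = mu n s ^ ((j:ℕ)-1) := by rw [hmc, one_mul]
    rw [← h1]; ring

lemma AHA_mulVec_u (s : ℕ) :
    (Aᴴ * A).mulVec (uu n s) = ((2 + 2 * Real.cos (th n s) : ℝ) : ℂ) • uu n s := by
  rw [← Matrix.mulVec_mulVec, A_mulVec_u hn hA s, Matrix.mulVec_smul, AH_mulVec_u hn hA s,
    smul_smul]
  congr 1
  have h1 := mu_add_conj n s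
  have h2 := mu_mul_conj n s
  push_cast
  calc (1 + mu n s) * (1 + (starRingEnd ℂ) (mu n s))
      = 1 + (mu n s + (starRingEnd ℂ) (mu n s)) + mu n s * (starRingEnd ℂ) (mu n s) := by ring
    _ = 2 + 2 * Complex.cos ((th n s : ℝ) : ℂ) := by
        rw [h1, h2, Complex.ofReal_mul, Complex.ofReal_cos]; push_cast; ring
end

lemma mu_inj {n : ℕ} (hn : 2 ≤ n) : Function.Injective (fun s : Fin n => mu n (s:ℕ)) := by
  intro s t hst
  simp only [mu, Complex.exp_eq_exp_iff_exists_int] at hst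
  obtain ⟨k, hk⟩ := hst
  have him := congrArg Complex.im hk
  simp [Complex.add_im, Complex.mul_im, Complex.ofReal_re, Complex.ofReal_im] at him
  -- him : th n s = th n t + k * 2π  (roughly)
  have hn0 : (n:ℝ) ≠ 0 := Nat.cast_ne_zero.mpr (by omega)
  have hπ : Real.pi ≠ 0 := Real.pi_ne_zero
  rw [th, th] at him
  have key : ((s:ℕ):ℝ) - ((t:ℕ):ℝ) = (k:ℝ) * n := by
    field_simp at him
    nlinarith [him, Real.pi_pos]
  have key2 : ((s:ℕ):ℤ) - ((t:ℕ):ℤ) = k * n := by exact_mod_cast key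
  have hs := s.isLt; have ht := t.isLt
  have : (s:ℕ) = (t:ℕ) := by
    rcases lt_trichotomy k 0 with h | h | h
    · have h1 : k ≤ -1 := by omega
      have h2 : k * n ≤ -n := by nlinarith [show (0:ℤ) < (n:ℤ) by omega]
      omega
    · rw [h, zero_mul] at key2; omega
    · have h1 : 1 ≤ k := h
      have h2 : (n:ℤ) ≤ k * n := by nlinarith [show (0:ℤ) < (n:ℤ) by omega]
      omega
  exact Fin.ext this

lemma cos_th_le {n : ℕ} (hn : 2 ≤ n) (s : ℕ) (hs : s < n) :
    Real.cos (th n s) ≤ Real.cos (Real.pi / n) := by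
  have hπ := Real.pi_pos
  have hn0 : (0:ℝ) < n := by positivity
  have h1 : Real.pi / n ≤ th n s := by
    rw [th, div_le_div_iff₀ hn0 hn0]
    nlinarith [mul_nonneg (mul_nonneg hπ.le (Nat.cast_nonneg s : (0:ℝ) ≤ s)) hn0.le]
  have h2 : th n s ≤ 2 * Real.pi - Real.pi / n := by
    have he : 2 * Real.pi - Real.pi / n = Real.pi * (2 * n - 1) / n := by
      field_simp
    rw [th, he, div_le_div_iff₀ hn0 hn0]
    have hsn : (s:ℝ) + 1 ≤ n := by exact_mod_cast Nat.succ_le_of_lt hs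
    nlinarith [mul_nonneg (mul_nonneg hπ.le hn0.le) (by linarith : (0:ℝ) ≤ (n:ℝ) - (s:ℝ) - 1)]
  rcases le_or_gt (th n s) Real.pi with h | h
  · exact Real.cos_le_cos_of_nonneg_of_le_pi (by positivity) h h1
  · rw [← Real.cos_two_pi_sub (th n s)]
    exact Real.cos_le_cos_of_nonneg_of_le_pi (by positivity) (by linarith) (by linarith)

lemma uu_ne_zero {n : ℕ} (hn : 2 ≤ n) (s : ℕ) : uu n s ≠ 0 := by
  intro h
  have := congrFun h ⟨0, by omega⟩
  simp [uu] at this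

lemma half_angle {n : ℕ} (hn : 2 ≤ n) :
    (2 * Real.cos (Real.pi / (2 * n))) ^ 2 = 2 + 2 * Real.cos (Real.pi / n) := by
  have h : Real.pi / n = 2 * (Real.pi / (2 * n)) := by
    field_simp
  rw [h, Real.cos_two_mul]
  ring

theorem stmt_11 {n : ℕ} (hn : 2 ≤ n)
    (A : Matrix (Fin n) (Fin n) ℂ)
    (hA : ∀ j k : Fin n, A j k =
      if (j : ℕ) = (k : ℕ) then 1
      else if (k : ℕ) = (j : ℕ) + 1 then 1
      else if (j : ℕ) = n - 1 ∧ (k : ℕ) = 0 then -1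
      else 0) :
    (∀ s : Fin n, ∃ u : Fin n → ℂ, u ≠ 0 ∧
        A.mulVec u =
          (1 + Complex.exp ((Real.pi : ℂ) * Complex.I * (2 * (s : ℕ) + 1) / n)) • u) ∧
    IsGreatest {x : ℝ | 0 ≤ x ∧ ∃ v : Fin n → ℂ, v ≠ 0 ∧
        (Aᴴ * A).mulVec v = ((x : ℂ) ^ 2) • v}
      (2 * Real.cos (Real.pi / (2 * n))) := by
  have hn0 : (n:ℝ) ≠ 0 := Nat.cast_ne_zero.mpr (by omega)
  have hexp_eq : ∀ s : ℕ,
      Complex.exp ((Real.pi : ℂ) * Complex.I * (2 * (s : ℕ) + 1) / n) = mu n s := by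
    intro s
    rw [mu]
    congr 1
    rw [th]
    push_cast
    field_simp
  have hcosnn : 0 ≤ Real.cos (Real.pi / (2 * n)) := by
    apply Real.cos_nonneg_of_mem_Icc
    constructor
    · have := Real.pi_pos
      have : 0 ≤ Real.pi / (2 * n) := by positivity
      linarith [Real.pi_pos]
    · rw [div_le_div_iff₀ (by positivity) (by norm_num : (0:ℝ) < 2)]
      nlinarith [Real.pi_pos, (by exact_mod_cast hn : (2:ℝ) ≤ n),
        mul_nonneg Real.pi_pos.le (show (0:ℝ) ≤ (n:ℝ) - 1 by
          have : (2:ℝ) ≤ n := by exact_mod_cast hn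
          linarith)]
  constructor
  · intro s
    refine ⟨uu n s, uu_ne_zero hn s, ?_⟩
    rw [hexp_eq s]
    exact A_mulVec_u hn hA s
  constructor
  · -- membership
    refine ⟨by positivity, uu n 0, uu_ne_zero hn 0, ?_⟩
    rw [AHA_mulVec_u hn hA 0]
    congr 1
    have hth0 : th n 0 = Real.pi / n := by rw [th]; push_cast; ring
    have : ((2 * Real.cos (Real.pi / (2 * n)) : ℝ) : ℂ) ^ 2
        = (((2 * Real.cos (Real.pi / (2 * n))) ^ 2 : ℝ) : ℂ) := by push_cast; ring
    rw [this, half_angle hn, hth0]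
  · -- upper bound
    rintro x ⟨hx0, v, hv0, hv⟩
    set M : Matrix (Fin n) (Fin n) ℂ :=
      (Matrix.vandermonde (fun s : Fin n => mu n (s:ℕ)))ᵀ with hM
    have hdet : IsUnit M.det := by
      rw [hM, Matrix.det_transpose, isUnit_iff_ne_zero]
      exact Matrix.det_vandermonde_ne_zero_iff.mpr (mu_inj hn)
    set c : Fin n → ℂ := M⁻¹.mulVec v with hc
    have hMc : M.mulVec c = v := by
      rw [hc, Matrix.mulVec_mulVec, Matrix.mul_nonsing_inv _ hdet, Matrix.one_mulVec]
    have hc0 : c ≠ 0 := by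
      intro h
      exact hv0 (by rw [← hMc, h, Matrix.mulVec_zero])
    have expand : ∀ d : Fin n → ℂ, M.mulVec d = ∑ s : Fin n, d s • uu n (s:ℕ) := by
      intro d
      funext j
      simp only [Matrix.mulVec, dotProduct, hM, Matrix.transpose_apply, Matrix.vandermonde,
        Matrix.of_apply, Finset.sum_apply, Pi.smul_apply, smul_eq_mul, uu]
      exact Finset.sum_congr rfl fun s _ => mul_comm _ _
    have step : (Aᴴ * A).mulVec (M.mulVec c)
        = M.mulVec (fun s => ((2 + 2 * Real.cos (th n (s:ℕ)) : ℝ) : ℂ) * c s) := by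
      rw [expand c, expand _]
      have hlin : (Aᴴ * A).mulVec (∑ s : Fin n, c s • uu n (s:ℕ))
          = ∑ s : Fin n, c s • ((Aᴴ * A).mulVec (uu n (s:ℕ))) := by
        rw [← Matrix.mulVecLin_apply, map_sum]
        simp only [_root_.map_smul, Matrix.mulVecLin_apply]
      rw [hlin]
      refine Finset.sum_congr rfl fun s _ => ?_
      rw [AHA_mulVec_u hn hA (s:ℕ), smul_smul, mul_comm]
    have heq : (fun s : Fin n => ((2 + 2 * Real.cos (th n (s:ℕ)) : ℝ) : ℂ) * c s)
        = fun s : Fin n => ((x:ℂ)^2) * c s := by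
      have h1 : M.mulVec (fun s : Fin n => ((2 + 2 * Real.cos (th n (s:ℕ)) : ℝ) : ℂ) * c s)
          = M.mulVec (fun s : Fin n => ((x:ℂ)^2) * c s) := by
        rw [← step, hMc, hv]
        rw [show (fun s : Fin n => ((x:ℂ)^2) * c s) = ((x:ℂ)^2) • c from funext fun s => by
          simp [Pi.smul_apply, smul_eq_mul]]
        rw [Matrix.mulVec_smul, hMc]
      have h2 := congrArg (M⁻¹.mulVec) h1
      rwa [Matrix.mulVec_mulVec, Matrix.mulVec_mulVec, Matrix.nonsing_inv_mul _ hdet,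
        Matrix.one_mulVec, Matrix.one_mulVec] at h2
    obtain ⟨s, hs⟩ : ∃ s : Fin n, c s ≠ 0 := by
      by_contra h
      push_neg at h
      exact hc0 (funext h)
    have hlam : ((x:ℂ)^2) = ((2 + 2 * Real.cos (th n (s:ℕ)) : ℝ) : ℂ) := by
      have h := congrFun heq s
      exact (mul_right_cancel₀ hs h).symm
    have hx2 : x^2 = 2 + 2 * Real.cos (th n (s:ℕ)) := by
      have : ((x^2 : ℝ) : ℂ) = ((2 + 2 * Real.cos (th n (s:ℕ)) : ℝ) : ℂ) := by
        push_cast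
        rw [hlam]
        push_cast
        ring
      exact_mod_cast this
    have hb := cos_th_le hn (s:ℕ) s.isLt
    have hha := half_angle hn
    nlinarith [hx0, hcosnn, hx2, hb, hha]
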